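/- Hestenes' Theorem: if G is a nondegenerate geometric algebra and F : G → G is an outermorphism with adjoint F* (defined by F*(x) ∗ y = x ∗ F(y) for all x, y), then F* is also an outermorphism and x ⌞ F(y) = F(F*(x) ⌞ y) and F(x) ⌟ y = F(x ⌟ F*(y)) for all x, y ∈ G. -/

import Mathlib

open scoped Classical

/-- `τ` is a grassmannian map on the finite set `X` with signature `r`. -/
def Grassmannian {X : Type*} [DecidableEq X] {R : Type*} [CommRing R]
    (r : X → R) (τ : Finset X → Finset X → R) : Prop :=
  (∀ x : X, τ {x} {x} = r x) ∧
  (∀ x y : X, x ≠ y → τ {x} {y} = - τ {y} {x}) ∧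
  (∀ A : Finset X, τ (∅ : Finset X) A = 1 ∧ τ A (∅ : Finset X) = 1) ∧
  (∀ A B C : Finset X, τ A B * τ (symmDiff A B) C = τ A (symmDiff B C) * τ B C) ∧
  (∀ A B : Finset X, A ∩ B = ∅ → τ A B = 1 ∨ τ A B = -1)

variable {X : Type*} [DecidableEq X] {R : Type*} [CommRing R]

/-- The outer product `x ∧ y` of the Clifford algebra `Cl(X,R,r)`. -/
noncomputable def clWedge (τ : Finset X → Finset X → R) (f g : Finset X →₀ R) :
    Finset X →₀ R :=
  f.sum fun A a => g.sum fun B b =>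
    if A ∩ B = (∅ : Finset X) then Finsupp.single (symmDiff A B) (a * b * τ A B) else 0

/-- The left inner product `x ⌞ y`. -/
noncomputable def clLeftInner (τ : Finset X → Finset X → R) (f g : Finset X →₀ R) :
    Finset X →₀ R :=
  f.sum fun A a => g.sum fun B b =>
    if A ⊆ B then Finsupp.single (symmDiff A B) (a * b * τ A B) else 0

/-- The right inner product `x ⌟ y`. -/
noncomputable def clRightInner (τ : Finset X → Finset X → R) (f g : Finset X →₀ R) :
    Finset X →₀ R :=
  f.sum fun A a => g.sum fun B b =>
    if B ⊆ A then Finsupp.single (symmDiff A B) (a * b * τ A B) else 0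

/-- The scalar product `x ∗ y` (a scalar multiple of the empty word `∅ = 1`). -/
noncomputable def clScalar (τ : Finset X → Finset X → R) (f g : Finset X →₀ R) :
    Finset X →₀ R :=
  f.sum fun A a => g.sum fun B b =>
    if A = B then Finsupp.single (∅ : Finset X) (a * b * τ A B) else 0

/-- The grade-`k` part `Cl^k(X)`: elements supported on subsets of cardinality `k`. -/
noncomputable def clGrade (R : Type*) [CommRing R] {X : Type*} [DecidableEq X] (k : ℕ) :
    Submodule R (Finset X →₀ R) :=
  Finsupp.supported R R {A : Finset X | A.card = k}

/-- An outermorphism of `Cl(X)`: a linear map fixing the unit, preserving grades, and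
multiplicative for the outer product. -/
def IsOutermorphism (τ : Finset X → Finset X → R)
    (F : (Finset X →₀ R) →ₗ[R] (Finset X →₀ R)) : Prop :=
  F (Finsupp.single (∅ : Finset X) 1) = Finsupp.single (∅ : Finset X) 1 ∧
  (∀ m : ℕ, Submodule.map F (clGrade R m) ≤ clGrade R (X := X) m) ∧
  (∀ x y : Finset X →₀ R, F (clWedge τ x y) = clWedge τ (F x) (F y))

set_option linter.unusedSectionVars false

namespace HestenesAux


noncomputable def gop (P : Finset X → Finset X → Prop) [∀ A B, Decidable (P A B)]
    (τ : Finset X → Finset X → R) (f g : Finset X →₀ R) : Finset X →₀ R :=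
  f.sum fun A a => g.sum fun B b =>
    if P A B then Finsupp.single (symmDiff A B) (a * b * τ A B) else 0

variable {τ : Finset X → Finset X → R} {P : Finset X → Finset X → Prop} [∀ A B, Decidable (P A B)]

lemma gop_zero_left (g : Finset X →₀ R) : gop P τ 0 g = 0 := Finsupp.sum_zero_index

lemma gop_zero_right (f : Finset X →₀ R) : gop P τ f 0 = 0 := by
  simp [gop]

lemma gop_single_left (A : Finset X) (a : R) (g : Finset X →₀ R) :
    gop P τ (Finsupp.single A a) g
      = g.sum fun B b => if P A B then Finsupp.single (symmDiff A B) (a * b * τ A B) else 0 := by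
  rw [gop, Finsupp.sum_single_index]
  simp

lemma gop_single_single (A B : Finset X) (a b : R) :
    gop P τ (Finsupp.single A a) (Finsupp.single B b)
      = if P A B then Finsupp.single (symmDiff A B) (a * b * τ A B) else 0 := by
  rw [gop_single_left, Finsupp.sum_single_index]
  simp

lemma gop_add_left (f₁ f₂ g : Finset X →₀ R) :
    gop P τ (f₁ + f₂) g = gop P τ f₁ g + gop P τ f₂ g := by
  unfold gop
  rw [Finsupp.sum_add_index']
  · intro A; simp
  · intro A a₁ a₂
    rw [← Finsupp.sum_add]
    apply Finsupp.sum_congr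
    intro B _
    split_ifs
    · rw [add_mul, add_mul, Finsupp.single_add]
    · simp

lemma gop_add_right (f g₁ g₂ : Finset X →₀ R) :
    gop P τ f (g₁ + g₂) = gop P τ f g₁ + gop P τ f g₂ := by
  unfold gop
  rw [← Finsupp.sum_add]
  apply Finsupp.sum_congr
  intro A _
  rw [Finsupp.sum_add_index']
  · intro B; simp
  · intro B b₁ b₂
    split_ifs
    · rw [show ∀ x : R, (f A) * (b₁ + b₂) * x = f A * b₁ * x + f A * b₂ * x from fun x => by ring,
        Finsupp.single_add]
    · simp

lemma gop_smul_left (c : R) (f g : Finset X →₀ R) : gop P τ (c • f) g = c • gop P τ f g := by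
  unfold gop
  rw [Finsupp.sum_smul_index (by intro A; simp), Finsupp.smul_sum]
  apply Finsupp.sum_congr
  intro A _
  rw [Finsupp.smul_sum]
  apply Finsupp.sum_congr
  intro B _
  split_ifs
  · rw [Finsupp.smul_single, smul_eq_mul]; congr 1; ring
  · simp

lemma gop_smul_right (c : R) (f g : Finset X →₀ R) : gop P τ f (c • g) = c • gop P τ f g := by
  unfold gop
  rw [Finsupp.smul_sum]
  apply Finsupp.sum_congr
  intro A _
  rw [Finsupp.sum_smul_index (by intro B; simp), Finsupp.smul_sum]
  apply Finsupp.sum_congr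
  intro B _
  split_ifs
  · rw [Finsupp.smul_single, smul_eq_mul]; congr 1; ring
  · simp

lemma gop_neg_left (f g : Finset X →₀ R) : gop P τ (-f) g = - gop P τ f g := by
  have := gop_smul_left (τ := τ) (P := P) (-1 : R) f g
  simpa using this

lemma gop_sub_left (f₁ f₂ g : Finset X →₀ R) :
    gop P τ (f₁ - f₂) g = gop P τ f₁ g - gop P τ f₂ g := by
  rw [sub_eq_add_neg, gop_add_left, gop_neg_left, sub_eq_add_neg]

lemma gop_neg_right (f g : Finset X →₀ R) : gop P τ f (-g) = - gop P τ f g := by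
  have := gop_smul_right (τ := τ) (P := P) (-1 : R) f g
  simpa using this

lemma gop_sub_right (f g₁ g₂ : Finset X →₀ R) :
    gop P τ f (g₁ - g₂) = gop P τ f g₁ - gop P τ f g₂ := by
  rw [sub_eq_add_neg, gop_add_right, gop_neg_right, sub_eq_add_neg]

lemma clWedge_eq (f g : Finset X →₀ R) :
    clWedge τ f g = gop (fun A B => A ∩ B = ∅) τ f g := rfl

lemma clLeftInner_eq (f g : Finset X →₀ R) :
    clLeftInner τ f g = gop (fun A B => A ⊆ B) τ f g := rfl

lemma clRightInner_eq (f g : Finset X →₀ R) :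
    clRightInner τ f g = gop (fun A B => B ⊆ A) τ f g := rfl

noncomputable def sc (τ : Finset X → Finset X → R) (f g : Finset X →₀ R) : R :=
  f.sum fun A a => a * g A * τ A A

lemma sc_zero_left (g : Finset X →₀ R) : sc τ 0 g = 0 := Finsupp.sum_zero_index

lemma sc_zero_right (f : Finset X →₀ R) : sc τ f 0 = 0 := by simp [sc]

lemma sc_add_left (f₁ f₂ g : Finset X →₀ R) : sc τ (f₁ + f₂) g = sc τ f₁ g + sc τ f₂ g := by
  unfold sc
  rw [Finsupp.sum_add_index']
  · intro A; simp
  · intro A a₁ a₂; ring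

lemma sc_add_right (f g₁ g₂ : Finset X →₀ R) : sc τ f (g₁ + g₂) = sc τ f g₁ + sc τ f g₂ := by
  unfold sc
  rw [← Finsupp.sum_add]
  apply Finsupp.sum_congr
  intro A _
  rw [Finsupp.add_apply]
  ring

lemma sc_smul_left (c : R) (f g : Finset X →₀ R) : sc τ (c • f) g = c * sc τ f g := by
  unfold sc
  rw [Finsupp.sum_smul_index (by intro A; simp)]
  rw [Finsupp.mul_sum]
  apply Finsupp.sum_congr
  intro A _; ring

lemma sc_smul_right (c : R) (f g : Finset X →₀ R) : sc τ f (c • g) = c * sc τ f g := by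
  unfold sc
  rw [Finsupp.mul_sum]
  apply Finsupp.sum_congr
  intro A _
  rw [Finsupp.smul_apply]
  simp only [smul_eq_mul]; ring

lemma sc_single_left (A : Finset X) (a : R) (g : Finset X →₀ R) :
    sc τ (Finsupp.single A a) g = a * g A * τ A A := by
  rw [sc, Finsupp.sum_single_index]; simp

lemma sc_single_right (f : Finset X →₀ R) (B : Finset X) (b : R) :
    sc τ f (Finsupp.single B b) = f B * b * τ B B := by
  unfold sc
  have h1 : (f.sum fun A a => a * (Finsupp.single B b) A * τ A A)
      = f.sum fun A a => if B = A then a * b * τ A A else 0 := by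
    apply Finsupp.sum_congr
    intro A _
    rw [Finsupp.single_apply]
    split_ifs <;> simp
  rw [h1, Finsupp.sum_ite_eq]
  by_cases h : B ∈ f.support
  · rw [if_pos h]
  · rw [if_neg h, Finsupp.notMem_support_iff.mp h]; ring

lemma clScalar_eq (f g : Finset X →₀ R) :
    clScalar τ f g = Finsupp.single (∅ : Finset X) (sc τ f g) := by
  unfold clScalar sc
  rw [Finsupp.single_sum]
  apply Finsupp.sum_congr
  intro A _
  rw [Finsupp.sum_ite_eq]
  by_cases h : A ∈ g.support
  · rw [if_pos h]
  · rw [if_neg h, Finsupp.notMem_support_iff.mp h]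
    simp



section Tau

variable {r : X → R}

lemma sd_disj {A B : Finset X} (h : A ∩ B = ∅) : symmDiff A B = A ∪ B := by
  ext x
  simp only [Finset.mem_symmDiff, Finset.mem_union]
  have := Finset.eq_empty_iff_forall_notMem.mp h x
  rw [Finset.mem_inter] at this
  tauto

lemma sd_not_mem {a : X} {C : Finset X} (h : a ∉ C) :
    symmDiff ({a} : Finset X) C = insert a C := by
  ext x
  simp only [Finset.mem_symmDiff, Finset.mem_insert, Finset.mem_singleton]
  by_cases hx : x = a <;> simp [hx] <;> tauto

lemma sd_mem {a : X} {C : Finset X} (h : a ∈ C) :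
    symmDiff ({a} : Finset X) C = C.erase a := by
  ext x
  simp only [Finset.mem_symmDiff, Finset.mem_erase, Finset.mem_singleton]
  by_cases hx : x = a <;> simp [hx] <;> tauto

lemma sd_self (A : Finset X) : symmDiff A A = ∅ := by
  rw [symmDiff_self]; rfl

lemma sd_empty_left (A : Finset X) : symmDiff (∅ : Finset X) A = A := by
  rw [show (∅ : Finset X) = ⊥ from rfl, bot_symmDiff]

lemma sd_empty_right (A : Finset X) : symmDiff A (∅ : Finset X) = A := by
  rw [show (∅ : Finset X) = ⊥ from rfl, symmDiff_bot]

lemma sd_insert_right {a : X} {s : Finset X} (h : a ∉ s) :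
    symmDiff s (insert a s) = {a} := by
  ext x
  simp only [Finset.mem_symmDiff, Finset.mem_insert, Finset.mem_singleton]
  by_cases hx : x = a <;> simp [hx] <;> tauto

lemma erase_insert_comm' {a b : X} (hab : a ≠ b) (C : Finset X) :
    (insert b C).erase a = insert b (C.erase a) := by
  ext x
  simp only [Finset.mem_erase, Finset.mem_insert]
  by_cases hx : x = a <;> by_cases hxb : x = b <;> simp [hx, hxb] <;> tauto

lemma singleton_inter_empty {a : X} {C : Finset X} (h : a ∉ C) :
    ({a} : Finset X) ∩ C = ∅ := by
  ext x
  simp only [Finset.mem_inter, Finset.mem_singleton, Finset.notMem_empty, iff_false]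
  rintro ⟨rfl, hx⟩; exact h hx

lemma inter_singleton_empty {a : X} {C : Finset X} (h : a ∉ C) :
    C ∩ ({a} : Finset X) = ∅ := by
  rw [Finset.inter_comm]; exact singleton_inter_empty h

lemma tau_sq (hτ : Grassmannian r τ) {A B : Finset X} (h : A ∩ B = ∅) :
    τ A B * τ A B = 1 := by
  rcases hτ.2.2.2.2 A B h with h' | h' <;> rw [h'] <;> ring

lemma tau_unit (hτ : Grassmannian r τ) {A B : Finset X} (h : A ∩ B = ∅) :
    IsUnit (τ A B) :=
  IsUnit.of_mul_eq_one _ (tau_sq hτ h)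

lemma eq_of_sq {x y z : R} (hx : x * x = 1) (h : x * y = z) : y = x * z := by
  calc y = (x * x) * y := by rw [hx, one_mul]
  _ = x * (x * y) := by ring
  _ = x * z := by rw [h]

lemma t4a (hτ : Grassmannian r τ) (A C : Finset X) :
    τ A (symmDiff A C) * τ A C = τ A A := by
  have h := hτ.2.2.2.1 A A C
  rw [sd_self, (hτ.2.2.1 C).1, mul_one] at h
  exact h.symm

lemma tau_single_insert (hτ : Grassmannian r τ) {a : X} {D : Finset X} (h : a ∉ D) :
    τ {a} (insert a D) * τ {a} D = r a := by
  have h4 := t4a hτ {a} D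
  rw [sd_not_mem h] at h4
  rw [h4, hτ.1 a]

lemma tAA_unit (hτ : Grassmannian r τ) (hnd : ∀ x : X, IsUnit (r x)) (A : Finset X) :
    IsUnit (τ A A) := by
  induction A using Finset.induction_on with
  | empty => rw [(hτ.2.2.1 ∅).1]; exact isUnit_one
  | @insert a s ha ih =>
    set A := insert a s with hA
    have hdisj : ({a} : Finset X) ∩ s = ∅ := singleton_inter_empty ha
    have hdisj' : s ∩ ({a} : Finset X) = ∅ := inter_singleton_empty ha
    have hsA : symmDiff ({a} : Finset X) s = A := sd_not_mem ha
    have hsA2 : symmDiff s A = {a} := sd_insert_right ha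
    have hsA3 : symmDiff s ({a} : Finset X) = A := by
      rw [symmDiff_comm]; exact hsA
    have hα := hτ.2.2.2.1 {a} s A
    rw [hsA, hsA2, hτ.1 a] at hα
    -- hα : τ {a} s * τ A A = r a * τ s A
    have hγ := hτ.2.2.2.1 {a} s s
    rw [hsA, sd_self, (hτ.2.2.1 {a}).2] at hγ
    rw [one_mul] at hγ
    -- hγ : τ {a} s * τ A s = τ s s
    have hβ := hτ.2.2.2.1 s {a} s
    rw [hsA3, hsA] at hβ
    -- hβ : τ s {a} * τ A s = τ s A * τ {a} s
    have u1 : IsUnit (τ {a} s) := tau_unit hτ hdisj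
    have u2 : IsUnit (τ A s) := by
      have : IsUnit (τ {a} s * τ A s) := hγ ▸ ih
      exact isUnit_of_mul_isUnit_right this
    have u3 : IsUnit (τ s A) := by
      have : IsUnit (τ s A * τ {a} s) := by
        rw [← hβ]; exact (tau_unit hτ hdisj').mul u2
      exact isUnit_of_mul_isUnit_left this
    have : IsUnit (τ {a} s * τ A A) := hα ▸ (hnd a).mul u3
    exact isUnit_of_mul_isUnit_right this

lemma tau_swap (hτ : Grassmannian r τ) {a b : X} {C : Finset X}
    (ha : a ∈ C) (hb : b ∉ C) (hab : a ≠ b) :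
    τ {b} C * τ {a} (insert b C) = -(τ {a} C * τ {b} (C.erase a)) := by
  have haC' : a ∉ C.erase a := Finset.notMem_erase a C
  have hbC' : b ∉ C.erase a := fun h => hb (Finset.mem_of_mem_erase h)
  have hiC : insert a (C.erase a) = C := Finset.insert_erase ha
  have hsab : symmDiff ({b} : Finset X) {a} = symmDiff ({a} : Finset X) {b} := symmDiff_comm _ _
  have hdab : ({a} : Finset X) ∩ {b} = ∅ := singleton_inter_empty (by simp [hab])
  have hsd_ab : symmDiff ({a} : Finset X) {b} = insert a {b} := sd_not_mem (by simp [hab])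
  have hdq : symmDiff ({a} : Finset X) {b} ∩ C.erase a = ∅ := by
    rw [hsd_ab]
    ext x
    simp only [Finset.mem_inter, Finset.mem_insert, Finset.mem_singleton, Finset.notMem_empty,
      iff_false]
    rintro ⟨rfl | rfl, hx⟩
    · exact haC' hx
    · exact hbC' hx
  have s_p : τ {a} {b} * τ {a} {b} = 1 := tau_sq hτ hdab
  have s_q : τ (symmDiff ({a} : Finset X) {b}) (C.erase a)
      * τ (symmDiff ({a} : Finset X) {b}) (C.erase a) = 1 := tau_sq hτ hdq
  have s_u : τ {a} (C.erase a) * τ {a} (C.erase a) = 1 :=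
    tau_sq hτ (singleton_inter_empty haC')
  have s_v : τ {b} (C.erase a) * τ {b} (C.erase a) = 1 :=
    tau_sq hτ (singleton_inter_empty hbC')
  have s_w : τ {a} (insert b (C.erase a)) * τ {a} (insert b (C.erase a)) = 1 :=
    tau_sq hτ (singleton_inter_empty (by
      simp only [Finset.mem_insert]
      rintro (rfl | h)
      · exact hab rfl
      · exact haC' h))
  have c1 := hτ.2.2.2.1 {b} {a} (C.erase a)
  rw [hsab, sd_not_mem haC', hiC, hτ.2.1 b a (Ne.symm hab)] at c1
  have c2 := hτ.2.2.2.1 {a} {b} (C.erase a)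
  rw [sd_not_mem hbC'] at c2
  have c3 := t4a hτ {a} (insert b C)
  have hmem : a ∈ insert b C := Finset.mem_insert_of_mem ha
  rw [sd_mem hmem, erase_insert_comm' hab, hτ.1 a] at c3
  have c4 := t4a hτ {a} C
  rw [sd_mem ha, hτ.1 a] at c4
  have e1 : τ {b} C = τ {a} (C.erase a)
      * (-(τ {a} {b} * τ (symmDiff ({a} : Finset X) {b}) (C.erase a))) := by
    apply eq_of_sq s_u
    linear_combination -c1
  have e2 : τ {a} (insert b (C.erase a)) = τ {b} (C.erase a)
      * (τ {a} {b} * τ (symmDiff ({a} : Finset X) {b}) (C.erase a)) := by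
    apply eq_of_sq s_v
    linear_combination -c2
  have e3 : τ {a} (insert b C) = τ {a} (insert b (C.erase a)) * r a := eq_of_sq s_w c3
  have e4 : τ {a} C = τ {a} (C.erase a) * r a := eq_of_sq s_u c4
  rw [e1, e3, e2, e4]
  linear_combination
    (-(τ {a} (C.erase a) * τ {b} (C.erase a) * r a
        * τ (symmDiff ({a} : Finset X) {b}) (C.erase a)
        * τ (symmDiff ({a} : Finset X) {b}) (C.erase a))) * s_p
    + (-(τ {a} (C.erase a) * τ {b} (C.erase a) * r a)) * s_q

end Tau

section Chase

lemma sdc1 (A B : Finset X) : symmDiff B (symmDiff A B) = A := by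
  rw [symmDiff_comm A B, symmDiff_symmDiff_cancel_left]

lemma sdc2 (B C : Finset X) : symmDiff (symmDiff B C) B = C := by
  rw [symmDiff_comm, symmDiff_symmDiff_cancel_left]

lemma not_mem_of_disj {A B : Finset X} (h : A ∩ B = ∅) {x : X} (hx : x ∈ B) : x ∉ A := by
  intro hA
  exact (Finset.eq_empty_iff_forall_notMem.mp h x) (Finset.mem_inter.mpr ⟨hA, hx⟩)

lemma disj_of_forall {A B : Finset X} (h : ∀ x, x ∈ A → x ∈ B → False) : A ∩ B = ∅ := by
  rw [Finset.eq_empty_iff_forall_notMem]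
  intro x hx
  rw [Finset.mem_inter] at hx
  exact h x hx.1 hx.2

lemma ecA {A B : Finset X} (h : A ∩ B = ∅) : B ⊆ symmDiff A B := by
  intro x hx
  rw [Finset.mem_symmDiff]
  exact Or.inr ⟨hx, not_mem_of_disj h hx⟩

lemma ecA' {A B : Finset X} (h : A ∩ B = ∅) : A ⊆ symmDiff A B := by
  intro x hx
  rw [Finset.mem_symmDiff]
  refine Or.inl ⟨hx, fun hB => not_mem_of_disj h hB hx⟩

lemma ecB {A B : Finset X} (h : B ⊆ A) : B ∩ symmDiff A B = ∅ := by
  apply disj_of_forall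
  intro x hx hsd
  rw [Finset.mem_symmDiff] at hsd
  tauto

lemma ecC {B C : Finset X} (h : B ⊆ C) : symmDiff B C ∩ B = ∅ := by
  apply disj_of_forall
  intro x hsd hx
  rw [Finset.mem_symmDiff] at hsd
  have := h hx
  tauto

lemma ecD {A B C : Finset X} (h1 : A ∩ B = ∅) (h2 : symmDiff A B ⊆ C) :
    A ⊆ symmDiff B C := by
  intro x hx
  have hAB : x ∈ symmDiff A B := ecA' h1 hx
  have hC : x ∈ C := h2 hAB
  rw [Finset.mem_symmDiff]
  exact Or.inr ⟨hC, fun hB => not_mem_of_disj h1 hB hx⟩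

lemma ecE {A B C : Finset X} (h1 : B ⊆ C) (h2 : A ⊆ symmDiff B C) :
    symmDiff A B ⊆ C := by
  intro x hx
  rw [Finset.mem_symmDiff] at hx
  rcases hx with ⟨hA, hB⟩ | ⟨hB, hA⟩
  · have := h2 hA
    rw [Finset.mem_symmDiff] at this
    tauto
  · exact h1 hB

lemma ecF {A B C : Finset X} (h1 : B ⊆ C) (h2 : A ⊆ symmDiff B C) : A ∩ B = ∅ := by
  apply disj_of_forall
  intro x hA hB
  have := h2 hA
  rw [Finset.mem_symmDiff] at this
  have := h1 hB
  tauto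

end Chase

section Identities

variable {r : X → R}

lemma adj1 (hτ : Grassmannian r τ) (x y z : Finset X →₀ R) :
    sc τ (clWedge τ x y) z = sc τ x (clLeftInner τ y z) := by
  rw [clWedge_eq, clLeftInner_eq]
  induction x using Finsupp.induction_linear with
  | zero => rw [gop_zero_left, sc_zero_left, sc_zero_left]
  | add f g hf hg => rw [gop_add_left, sc_add_left, sc_add_left, hf, hg]
  | single A a =>
    induction y using Finsupp.induction_linear with
    | zero => rw [gop_zero_right, gop_zero_left, sc_zero_left, sc_zero_right]
    | add f g hf hg => rw [gop_add_right, gop_add_left, sc_add_left, sc_add_right, hf, hg]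
    | single B b =>
      induction z using Finsupp.induction_linear with
      | zero => rw [gop_zero_right, sc_zero_right, sc_zero_right]
      | add f g hf hg => rw [gop_add_right, sc_add_right, sc_add_right, hf, hg]
      | single C c =>
        rw [gop_single_single, gop_single_single]
        by_cases h1 : A ∩ B = ∅
        · rw [if_pos h1]
          by_cases h2 : B ⊆ C
          · rw [if_pos h2, sc_single_left, sc_single_left]
            simp only [Finsupp.single_apply]
            by_cases h3 : C = symmDiff A B
            · rw [if_pos h3, if_pos (by rw [h3, sdc1])]
              subst h3
              have key := hτ.2.2.2.1 A B (symmDiff A B)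
              rw [sdc1] at key
              linear_combination (a * b * c) * key
            · rw [if_neg h3, if_neg (fun h4 : symmDiff B C = A => h3 (by rw [← h4, sdc2]))]
              ring
          · rw [if_neg h2, sc_zero_right, sc_single_left]
            simp only [Finsupp.single_apply]
            rw [if_neg (fun h3 : C = symmDiff A B => h2 (by rw [h3]; exact ecA h1))]
            ring
        · rw [if_neg h1, sc_zero_left]
          by_cases h2 : B ⊆ C
          · rw [if_pos h2, sc_single_left]
            simp only [Finsupp.single_apply]
            rw [if_neg (fun h4 : symmDiff B C = A => h1 (by rw [← h4]; exact ecC h2))]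
            ring
          · rw [if_neg h2, sc_zero_right]

lemma adj2 (hτ : Grassmannian r τ) (x y z : Finset X →₀ R) :
    sc τ (clRightInner τ x y) z = sc τ x (clWedge τ y z) := by
  rw [clWedge_eq, clRightInner_eq]
  induction x using Finsupp.induction_linear with
  | zero => rw [gop_zero_left, sc_zero_left, sc_zero_left]
  | add f g hf hg => rw [gop_add_left, sc_add_left, sc_add_left, hf, hg]
  | single A a =>
    induction y using Finsupp.induction_linear with
    | zero => rw [gop_zero_right, gop_zero_left, sc_zero_left, sc_zero_right]
    | add f g hf hg => rw [gop_add_right, gop_add_left, sc_add_left, sc_add_right, hf, hg]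
    | single B b =>
      induction z using Finsupp.induction_linear with
      | zero => rw [gop_zero_right, sc_zero_right, sc_zero_right]
      | add f g hf hg => rw [gop_add_right, sc_add_right, sc_add_right, hf, hg]
      | single C c =>
        rw [gop_single_single, gop_single_single]
        by_cases h1 : B ⊆ A
        · rw [if_pos h1]
          by_cases h2 : B ∩ C = ∅
          · rw [if_pos h2, sc_single_left, sc_single_left]
            simp only [Finsupp.single_apply]
            by_cases h3 : C = symmDiff A B
            · rw [if_pos h3, if_pos (by rw [h3, sdc1])]
              subst h3
              have key := hτ.2.2.2.1 A B (symmDiff A B)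
              rw [sdc1] at key
              linear_combination (a * b * c) * key
            · rw [if_neg h3, if_neg (fun h4 : symmDiff B C = A => h3 (by rw [← h4, sdc2]))]
              ring
          · rw [if_neg h2, sc_zero_right, sc_single_left]
            simp only [Finsupp.single_apply]
            rw [if_neg (fun h3 : C = symmDiff A B => h2 (by rw [h3]; exact ecB h1))]
            ring
        · rw [if_neg h1, sc_zero_left]
          by_cases h2 : B ∩ C = ∅
          · rw [if_pos h2, sc_single_left]
            simp only [Finsupp.single_apply]
            rw [if_neg (fun h4 : symmDiff B C = A => h1 (by rw [← h4]; exact ecA' h2))]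
            ring
          · rw [if_neg h2, sc_zero_right]

lemma contract_assoc (hτ : Grassmannian r τ) (x y z : Finset X →₀ R) :
    clLeftInner τ (clWedge τ x y) z = clLeftInner τ x (clLeftInner τ y z) := by
  rw [clWedge_eq, clLeftInner_eq, clLeftInner_eq, clLeftInner_eq]
  induction x using Finsupp.induction_linear with
  | zero => rw [gop_zero_left, gop_zero_left, gop_zero_left]
  | add f g hf hg => rw [gop_add_left, gop_add_left, gop_add_left, hf, hg]
  | single A a =>
    induction y using Finsupp.induction_linear with
    | zero => rw [gop_zero_right, gop_zero_left, gop_zero_right]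
    | add f g hf hg => rw [gop_add_right, gop_add_left, gop_add_left, gop_add_right, hf, hg]
    | single B b =>
      induction z using Finsupp.induction_linear with
      | zero => rw [gop_zero_right, gop_zero_right, gop_zero_right]
      | add f g hf hg => rw [gop_add_right, gop_add_right, gop_add_right, hf, hg]
      | single C c =>
        rw [gop_single_single A B a b, gop_single_single B C b c]
        by_cases h1 : A ∩ B = ∅
        · rw [if_pos h1]
          by_cases h2 : B ⊆ C
          · rw [if_pos h2, gop_single_single, gop_single_single]
            by_cases h3 : symmDiff A B ⊆ C
            · rw [if_pos h3, if_pos (ecD h1 h3), symmDiff_assoc]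
              congr 1
              have key := hτ.2.2.2.1 A B C
              linear_combination (a * b * c) * key
            · rw [if_neg h3, if_neg (fun h4 => h3 (ecE h2 h4))]
          · rw [if_neg h2, gop_zero_right, gop_single_single,
              if_neg (fun h3 => h2 ((ecA h1).trans h3))]
        · rw [if_neg h1, gop_zero_left]
          by_cases h2 : B ⊆ C
          · rw [if_pos h2, gop_single_single, if_neg (fun h4 => h1 (ecF h2 h4))]
          · rw [if_neg h2, gop_zero_right]

lemma sc_symm (f g : Finset X →₀ R) : sc τ f g = sc τ g f := by
  induction f using Finsupp.induction_linear with
  | zero => rw [sc_zero_left, sc_zero_right]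
  | add f g hf hg => rw [sc_add_left, sc_add_right, hf, hg]
  | single A a => rw [sc_single_left, sc_single_right]; ring

lemma leftInner_empty_left (hτ : Grassmannian r τ) (a : R) (g : Finset X →₀ R) :
    clLeftInner τ (Finsupp.single ∅ a) g = a • g := by
  rw [clLeftInner_eq, gop_single_left]
  have hg : a • g = g.sum fun B b => Finsupp.single B (a * b) := by
    conv_lhs => rw [← Finsupp.sum_single g]
    rw [Finsupp.smul_sum]
    apply Finsupp.sum_congr
    intro B _
    rw [Finsupp.smul_single, smul_eq_mul]
  rw [hg]
  apply Finsupp.sum_congr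
  intro B _
  rw [if_pos (Finset.empty_subset B), sd_empty_left, (hτ.2.2.1 B).1, mul_one]

lemma wedge_empty_left (hτ : Grassmannian r τ) (a : R) (g : Finset X →₀ R) :
    clWedge τ (Finsupp.single ∅ a) g = a • g := by
  rw [clWedge_eq, gop_single_left]
  have hg : a • g = g.sum fun B b => Finsupp.single B (a * b) := by
    conv_lhs => rw [← Finsupp.sum_single g]
    rw [Finsupp.smul_sum]
    apply Finsupp.sum_congr
    intro B _
    rw [Finsupp.smul_single, smul_eq_mul]
  rw [hg]
  apply Finsupp.sum_congr
  intro B _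
  rw [if_pos (Finset.empty_inter B), sd_empty_left, (hτ.2.2.1 B).1, mul_one]

lemma leftInner_empty_right (hτ : Grassmannian r τ) (g : Finset X →₀ R) :
    clLeftInner τ g (Finsupp.single (∅ : Finset X) (1:R)) = Finsupp.single ∅ (g ∅) := by
  rw [clLeftInner_eq]
  unfold gop
  refine Eq.trans (Finsupp.sum_congr
    (g2 := fun A a => if A = ∅ then Finsupp.single (∅ : Finset X) a else 0)
    fun A _ => ?_) ?_
  · beta_reduce
    rw [Finsupp.sum_single_index (by simp)]
    by_cases hA : A = ∅
    · subst hA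
      rw [if_pos (Finset.empty_subset _), if_pos rfl, sd_empty_left, (hτ.2.2.1 ∅).1,
        mul_one, mul_one]
    · rw [if_neg (fun h => hA (Finset.subset_empty.mp h)), if_neg hA]
  · rw [Finsupp.sum_ite_eq']
    by_cases h : (∅ : Finset X) ∈ g.support
    · rw [if_pos h]
    · rw [if_neg h, Finsupp.notMem_support_iff.mp h, Finsupp.single_zero]

lemma mem_grade_iff {u : Finset X →₀ R} {k : ℕ} :
    u ∈ clGrade R k ↔ ∀ B : Finset X, B.card ≠ k → u B = 0 := by
  rw [clGrade, Finsupp.mem_supported]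
  constructor
  · intro h B hB
    by_contra h0
    exact hB (h (Finset.mem_coe.mpr (Finsupp.mem_support_iff.mpr h0)))
  · intro h B hB
    rw [Finset.mem_coe, Finsupp.mem_support_iff] at hB
    by_contra h0
    exact hB (h B h0)

lemma single_mem_grade (B : Finset X) (b : R) :
    Finsupp.single B b ∈ clGrade R (B.card) := by
  rw [mem_grade_iff]
  intro C hC
  rw [Finsupp.single_apply, if_neg (fun h => hC (by rw [← h]))]

end Identities

section Wrappers

variable {r : X → R}

lemma wedge_zero_left (g : Finset X →₀ R) : clWedge τ 0 g = 0 := by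
  rw [clWedge_eq]; exact gop_zero_left g
lemma wedge_zero_right (f : Finset X →₀ R) : clWedge τ f 0 = 0 := by
  rw [clWedge_eq]; exact gop_zero_right f
lemma wedge_add_left (f₁ f₂ g : Finset X →₀ R) :
    clWedge τ (f₁ + f₂) g = clWedge τ f₁ g + clWedge τ f₂ g := by
  simp only [clWedge_eq]; exact gop_add_left f₁ f₂ g
lemma wedge_add_right (f g₁ g₂ : Finset X →₀ R) :
    clWedge τ f (g₁ + g₂) = clWedge τ f g₁ + clWedge τ f g₂ := by
  simp only [clWedge_eq]; exact gop_add_right f g₁ g₂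
lemma wedge_smul_left (c : R) (f g : Finset X →₀ R) :
    clWedge τ (c • f) g = c • clWedge τ f g := by
  simp only [clWedge_eq]; exact gop_smul_left c f g
lemma wedge_smul_right (c : R) (f g : Finset X →₀ R) :
    clWedge τ f (c • g) = c • clWedge τ f g := by
  simp only [clWedge_eq]; exact gop_smul_right c f g
lemma wedge_single_single (A B : Finset X) (a b : R) :
    clWedge τ (Finsupp.single A a) (Finsupp.single B b)
      = if A ∩ B = ∅ then Finsupp.single (symmDiff A B) (a * b * τ A B) else 0 := by
  rw [clWedge_eq, gop_single_single]

lemma li_zero_left (g : Finset X →₀ R) : clLeftInner τ 0 g = 0 := by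
  rw [clLeftInner_eq]; exact gop_zero_left g
lemma li_zero_right (f : Finset X →₀ R) : clLeftInner τ f 0 = 0 := by
  rw [clLeftInner_eq]; exact gop_zero_right f
lemma li_add_left (f₁ f₂ g : Finset X →₀ R) :
    clLeftInner τ (f₁ + f₂) g = clLeftInner τ f₁ g + clLeftInner τ f₂ g := by
  simp only [clLeftInner_eq]; exact gop_add_left f₁ f₂ g
lemma li_add_right (f g₁ g₂ : Finset X →₀ R) :
    clLeftInner τ f (g₁ + g₂) = clLeftInner τ f g₁ + clLeftInner τ f g₂ := by
  simp only [clLeftInner_eq]; exact gop_add_right f g₁ g₂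
lemma li_smul_left (c : R) (f g : Finset X →₀ R) :
    clLeftInner τ (c • f) g = c • clLeftInner τ f g := by
  simp only [clLeftInner_eq]; exact gop_smul_left c f g
lemma li_smul_right (c : R) (f g : Finset X →₀ R) :
    clLeftInner τ f (c • g) = c • clLeftInner τ f g := by
  simp only [clLeftInner_eq]; exact gop_smul_right c f g
lemma li_single_single (A B : Finset X) (a b : R) :
    clLeftInner τ (Finsupp.single A a) (Finsupp.single B b)
      = if A ⊆ B then Finsupp.single (symmDiff A B) (a * b * τ A B) else 0 := by
  rw [clLeftInner_eq, gop_single_single]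

lemma grade_card {u : Finset X →₀ R} {k : ℕ} (hu : u ∈ clGrade R k) {B : Finset X}
    (hB : B ∈ u.support) : B.card = k := by
  rw [clGrade, Finsupp.mem_supported] at hu
  exact hu hB

lemma contract_basis_grade1 (hτ : Grassmannian r τ) {v : Finset X →₀ R}
    (hv : v ∈ clGrade R 1) (a : X) :
    clLeftInner τ (Finsupp.single ({a} : Finset X) (1:R)) v
      = (v {a} * r a) • Finsupp.single (∅ : Finset X) (1:R) := by
  rw [clLeftInner_eq, gop_single_left]
  refine Eq.trans (Finsupp.sum_congr
    (g2 := fun B c => if B = {a} then Finsupp.single (∅ : Finset X) (c * r a) else 0)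
    fun B hB => ?_) ?_
  · beta_reduce
    have hcard : B.card = 1 := grade_card hv hB
    by_cases h1 : B = {a}
    · subst h1
      rw [if_pos (Finset.Subset.refl _), if_pos rfl, sd_self, hτ.1 a, one_mul]
    · rw [if_neg (fun hsub => h1 (Finset.eq_of_subset_of_card_le hsub
        (by simp [hcard])).symm), if_neg h1]
  · rw [Finsupp.sum_ite_eq', Finsupp.smul_single', mul_one]
    by_cases h : ({a} : Finset X) ∈ v.support
    · rw [if_pos h]
    · rw [if_neg h, Finsupp.notMem_support_iff.mp h, zero_mul, Finsupp.single_zero]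

lemma contract_grade1_basis (hτ : Grassmannian r τ) {v : Finset X →₀ R}
    (hv : v ∈ clGrade R 1) (b : X) :
    clLeftInner τ v (Finsupp.single ({b} : Finset X) (1:R))
      = (v {b} * r b) • Finsupp.single (∅ : Finset X) (1:R) := by
  rw [clLeftInner_eq]
  unfold gop
  refine Eq.trans (Finsupp.sum_congr
    (g2 := fun A c => if A = {b} then Finsupp.single (∅ : Finset X) (c * r b) else 0)
    fun A hA => ?_) ?_
  · beta_reduce
    rw [Finsupp.sum_single_index (by simp)]
    have hcard : A.card = 1 := grade_card hv hA
    by_cases h1 : A = {b}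
    · subst h1
      rw [if_pos (Finset.Subset.refl _), if_pos rfl, sd_self, hτ.1 b, mul_one]
    · rw [if_neg (fun hsub => h1 (Finset.eq_of_subset_of_card_le hsub
        (by simp [hcard]))), if_neg h1]
  · rw [Finsupp.sum_ite_eq', Finsupp.smul_single', mul_one]
    by_cases h : ({b} : Finset X) ∈ v.support
    · rw [if_pos h]
    · rw [if_neg h, Finsupp.notMem_support_iff.mp h, zero_mul, Finsupp.single_zero]

lemma leib_single (hτ : Grassmannian r τ) (a b : X) (C : Finset X) :
    clLeftInner τ (Finsupp.single ({a} : Finset X) (1:R))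
        (clWedge τ (Finsupp.single ({b} : Finset X) (1:R)) (Finsupp.single C (1:R)))
      = clWedge τ (clLeftInner τ (Finsupp.single ({a} : Finset X) (1:R))
            (Finsupp.single ({b} : Finset X) (1:R))) (Finsupp.single C (1:R))
        - clWedge τ (Finsupp.single ({b} : Finset X) (1:R))
            (clLeftInner τ (Finsupp.single ({a} : Finset X) (1:R)) (Finsupp.single C (1:R))) := by
  by_cases hab : a = b
  · subst hab
    have hL1 : clLeftInner τ (Finsupp.single ({a} : Finset X) (1:R))
        (Finsupp.single ({a} : Finset X) (1:R)) = Finsupp.single (∅ : Finset X) (r a) := by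
      rw [li_single_single, if_pos (Finset.Subset.refl _), sd_self, hτ.1 a, one_mul, one_mul]
    by_cases ha : a ∈ C
    · have hW : clWedge τ (Finsupp.single ({a} : Finset X) (1:R)) (Finsupp.single C (1:R))
          = 0 := by
        rw [wedge_single_single, if_neg]
        intro h
        have : a ∈ ({a} : Finset X) ∩ C := by simp [ha]
        rw [h] at this
        exact absurd this (Finset.notMem_empty a)
      have hL2 : clLeftInner τ (Finsupp.single ({a} : Finset X) (1:R)) (Finsupp.single C (1:R))
          = Finsupp.single (C.erase a) (τ {a} C) := by
        rw [li_single_single, if_pos (Finset.singleton_subset_iff.mpr ha), sd_mem ha,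
          one_mul, one_mul]
      rw [hW, li_zero_right, hL1, hL2, wedge_empty_left hτ, wedge_single_single,
        if_pos (singleton_inter_empty (Finset.notMem_erase a C)),
        sd_not_mem (Finset.notMem_erase a C), Finset.insert_erase ha,
        Finsupp.smul_single', mul_one]
      have hval : (1:R) * τ {a} C * τ {a} (C.erase a) = r a := by
        have h4 := t4a hτ {a} C
        rw [sd_mem ha, hτ.1 a] at h4
        linear_combination h4
      rw [hval, sub_self]
    · have hW : clWedge τ (Finsupp.single ({a} : Finset X) (1:R)) (Finsupp.single C (1:R))
          = Finsupp.single (insert a C) (τ {a} C) := by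
        rw [wedge_single_single, if_pos (singleton_inter_empty ha), sd_not_mem ha,
          one_mul, one_mul]
      have hL2 : clLeftInner τ (Finsupp.single ({a} : Finset X) (1:R)) (Finsupp.single C (1:R))
          = 0 := by
        rw [li_single_single, if_neg (fun h => ha (Finset.singleton_subset_iff.mp h))]
      rw [hW, hL1, hL2, wedge_zero_right, sub_zero, wedge_empty_left hτ,
        Finsupp.smul_single', mul_one, li_single_single,
        if_pos (Finset.singleton_subset_iff.mpr (Finset.mem_insert_self a C)),
        sd_mem (Finset.mem_insert_self a C), Finset.erase_insert ha]
      congr 1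
      have h6 := tau_single_insert hτ ha
      linear_combination h6
  · have hL1 : clLeftInner τ (Finsupp.single ({a} : Finset X) (1:R))
        (Finsupp.single ({b} : Finset X) (1:R)) = 0 := by
      rw [li_single_single, if_neg
        (fun h => hab (Finset.mem_singleton.mp (Finset.singleton_subset_iff.mp h)))]
    rw [hL1, wedge_zero_left, zero_sub]
    by_cases hb : b ∈ C
    · have hW : clWedge τ (Finsupp.single ({b} : Finset X) (1:R)) (Finsupp.single C (1:R))
          = 0 := by
        rw [wedge_single_single, if_neg]
        intro h
        have : b ∈ ({b} : Finset X) ∩ C := by simp [hb]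
        rw [h] at this
        exact absurd this (Finset.notMem_empty b)
      rw [hW, li_zero_right]
      by_cases ha : a ∈ C
      · have hL2 : clLeftInner τ (Finsupp.single ({a} : Finset X) (1:R)) (Finsupp.single C (1:R))
            = Finsupp.single (C.erase a) (τ {a} C) := by
          rw [li_single_single, if_pos (Finset.singleton_subset_iff.mpr ha), sd_mem ha,
            one_mul, one_mul]
        rw [hL2, wedge_single_single, if_neg]
        · rw [neg_zero]
        · intro h
          have : b ∈ ({b} : Finset X) ∩ C.erase a := by
            rw [Finset.mem_inter, Finset.mem_erase]
            exact ⟨Finset.mem_singleton_self b, fun h' => hab h'.symm, hb⟩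
          rw [h] at this
          exact absurd this (Finset.notMem_empty b)
      · have hL2 : clLeftInner τ (Finsupp.single ({a} : Finset X) (1:R)) (Finsupp.single C (1:R))
            = 0 := by
          rw [li_single_single, if_neg (fun h => ha (Finset.singleton_subset_iff.mp h))]
        rw [hL2, wedge_zero_right, neg_zero]
    · have hW : clWedge τ (Finsupp.single ({b} : Finset X) (1:R)) (Finsupp.single C (1:R))
          = Finsupp.single (insert b C) (τ {b} C) := by
        rw [wedge_single_single, if_pos (singleton_inter_empty hb), sd_not_mem hb,
          one_mul, one_mul]
      rw [hW]
      by_cases ha : a ∈ C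
      · have hmem : a ∈ insert b C := Finset.mem_insert_of_mem ha
        have hL2 : clLeftInner τ (Finsupp.single ({a} : Finset X) (1:R)) (Finsupp.single C (1:R))
            = Finsupp.single (C.erase a) (τ {a} C) := by
          rw [li_single_single, if_pos (Finset.singleton_subset_iff.mpr ha), sd_mem ha,
            one_mul, one_mul]
        have hbe : b ∉ C.erase a := fun h => hb (Finset.mem_of_mem_erase h)
        rw [hL2, li_single_single, if_pos (Finset.singleton_subset_iff.mpr hmem),
          sd_mem hmem, erase_insert_comm' hab, wedge_single_single,
          if_pos (singleton_inter_empty hbe), sd_not_mem hbe, ← Finsupp.single_neg]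
        congr 1
        have hs := tau_swap hτ ha hb hab
        linear_combination hs
      · have hL2 : clLeftInner τ (Finsupp.single ({a} : Finset X) (1:R)) (Finsupp.single C (1:R))
            = 0 := by
          rw [li_single_single, if_neg (fun h => ha (Finset.singleton_subset_iff.mp h))]
        have hnm : a ∉ insert b C := by
          rw [Finset.mem_insert]
          rintro (rfl | h)
          · exact hab rfl
          · exact ha h
        rw [hL2, wedge_zero_right, neg_zero, li_single_single,
          if_neg (fun h => hnm (Finset.singleton_subset_iff.mp h))]

end Wrappers

section Leib

variable {r : X → R}

lemma leib (hτ : Grassmannian r τ) (v x g : Finset X →₀ R)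
    (hv : v ∈ clGrade R 1) (hx : x ∈ clGrade R 1) :
    clLeftInner τ v (clWedge τ x g)
      = clWedge τ (clLeftInner τ v x) g - clWedge τ x (clLeftInner τ v g) := by
  rw [clGrade, Finsupp.supported_eq_span_single] at hv hx
  induction hv using Submodule.span_induction with
  | mem w hw =>
    obtain ⟨A, hA, rfl⟩ := hw
    obtain ⟨a, rfl⟩ := Finset.card_eq_one.mp hA
    induction hx using Submodule.span_induction with
    | mem u hu =>
      obtain ⟨B, hB, rfl⟩ := hu
      obtain ⟨b, rfl⟩ := Finset.card_eq_one.mp hB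
      induction g using Finsupp.induction_linear with
      | zero => simp only [wedge_zero_right, li_zero_right, sub_zero]
      | add g₁ g₂ h1 h2 =>
        rw [wedge_add_right, li_add_right, li_add_right, wedge_add_right, wedge_add_right,
          h1, h2]
        abel
      | single C c =>
        rw [show Finsupp.single C c = c • Finsupp.single C (1:R) by
          rw [Finsupp.smul_single', mul_one]]
        rw [wedge_smul_right, li_smul_right, li_smul_right, wedge_smul_right,
          wedge_smul_right, ← smul_sub, leib_single hτ a b C]
    | zero => simp only [wedge_zero_left, li_zero_right, sub_zero]
    | add u w hu hw ih1 ih2 =>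
      rw [wedge_add_left, li_add_right, li_add_right, wedge_add_left, wedge_add_left, ih1, ih2]
      abel
    | smul c u hu ih =>
      rw [wedge_smul_left, li_smul_right, li_smul_right, wedge_smul_left, wedge_smul_left,
        ih, smul_sub]
  | zero => simp only [li_zero_left, wedge_zero_left, wedge_zero_right, sub_zero]
  | add u w hu hw ih1 ih2 =>
    rw [li_add_left, li_add_left, li_add_left, wedge_add_left, wedge_add_right, ih1, ih2]
    abel
  | smul c u hu ih =>
    rw [li_smul_left, li_smul_left, li_smul_left, wedge_smul_left, wedge_smul_right, ih,
      smul_sub]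

end Leib

section FSection

variable {r : X → R}
variable {F Fadj : (Finset X →₀ R) →ₗ[R] (Finset X →₀ R)}

lemma scadj (hadj : ∀ x y : Finset X →₀ R, clScalar τ (Fadj x) y = clScalar τ x (F y))
    (x y : Finset X →₀ R) : sc τ (Fadj x) y = sc τ x (F y) := by
  have h := hadj x y
  rw [clScalar_eq, clScalar_eq] at h
  have h2 := congrArg (fun u : Finset X →₀ R => u ∅) h
  simpa using h2

lemma eq_of_sc (hτ : Grassmannian r τ) (hnd : ∀ x : X, IsUnit (r x))
    {u w : Finset X →₀ R} (h : ∀ z, sc τ u z = sc τ w z) : u = w := by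
  ext B
  have hB := h (Finsupp.single B 1)
  rw [sc_single_right, sc_single_right, mul_one, mul_one] at hB
  exact (tAA_unit hτ hnd B).mul_right_cancel hB

lemma F_grade (hF : IsOutermorphism τ F) {k : ℕ} {x : Finset X →₀ R}
    (hx : x ∈ clGrade R k) : F x ∈ clGrade R k :=
  hF.2.1 k ⟨x, hx, rfl⟩

lemma grade_coeff_zero {u : Finset X →₀ R} {k : ℕ} {B : Finset X}
    (hu : u ∈ clGrade R k) (hB : B.card ≠ k) : u B = 0 :=
  mem_grade_iff.mp hu B hB

lemma single_grade1 (a : X) : Finsupp.single ({a} : Finset X) (1:R) ∈ clGrade R 1 := by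
  have h := single_mem_grade ({a} : Finset X) (1:R)
  rwa [Finset.card_singleton] at h

lemma F_coeff_empty (hF : IsOutermorphism τ F) (w : Finset X →₀ R) : (F w) ∅ = w ∅ := by
  induction w using Finsupp.induction_linear with
  | zero => simp
  | add f g hf hg => rw [map_add, Finsupp.add_apply, Finsupp.add_apply, hf, hg]
  | single A a =>
    by_cases hA : A = ∅
    · subst hA
      rw [show Finsupp.single (∅ : Finset X) a = a • Finsupp.single (∅ : Finset X) (1:R) by
        rw [Finsupp.smul_single', mul_one], map_smul, hF.1]
    · have h1 : F (Finsupp.single A a) ∈ clGrade R A.card := F_grade hF (single_mem_grade A a)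
      have h2 : (∅ : Finset X).card ≠ A.card := by
        rw [Finset.card_empty]
        exact fun h => hA (Finset.card_eq_zero.mp h.symm)
      rw [grade_coeff_zero h1 h2, Finsupp.single_apply, if_neg hA]

lemma Fadj_grade (hτ : Grassmannian r τ) (hnd : ∀ x : X, IsUnit (r x))
    (hF : IsOutermorphism τ F)
    (hadj : ∀ x y : Finset X →₀ R, clScalar τ (Fadj x) y = clScalar τ x (F y))
    {k : ℕ} {x : Finset X →₀ R} (hx : x ∈ clGrade R k) : Fadj x ∈ clGrade R k := by
  rw [mem_grade_iff]
  intro B hB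
  have h1 : sc τ x (F (Finsupp.single B 1)) = 0 := by
    have hFB : F (Finsupp.single B 1) ∈ clGrade R B.card := F_grade hF (single_mem_grade B 1)
    rw [sc, Finsupp.sum]
    apply Finset.sum_eq_zero
    intro A hA
    have hAB : A.card ≠ B.card := by
      rw [grade_card hx hA]
      exact fun h => hB h.symm
    rw [grade_coeff_zero hFB hAB, mul_zero, zero_mul]
  have h2 := scadj hadj x (Finsupp.single B 1)
  rw [sc_single_right, mul_one, h1] at h2
  exact ((tAA_unit hτ hnd B).mul_left_eq_zero).mp h2

lemma Fadj_empty (hτ : Grassmannian r τ) (hnd : ∀ x : X, IsUnit (r x))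
    (hF : IsOutermorphism τ F)
    (hadj : ∀ x y : Finset X →₀ R, clScalar τ (Fadj x) y = clScalar τ x (F y)) :
    Fadj (Finsupp.single (∅ : Finset X) (1:R)) = Finsupp.single (∅ : Finset X) (1:R) := by
  apply eq_of_sc hτ hnd
  intro z
  rw [scadj hadj, sc_single_left, sc_single_left, (hτ.2.2.1 ∅).1, mul_one, mul_one,
    one_mul, one_mul, F_coeff_empty hF]

lemma L1_single (hτ : Grassmannian r τ) (hnd : ∀ x : X, IsUnit (r x))
    (hF : IsOutermorphism τ F)
    (hadj : ∀ x y : Finset X →₀ R, clScalar τ (Fadj x) y = clScalar τ x (F y)) :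
    ∀ (n : ℕ) (C : Finset X), C.card = n → ∀ (a : X) (c : R),
    clLeftInner τ (Finsupp.single ({a} : Finset X) (1:R)) (F (Finsupp.single C c))
      = F (clLeftInner τ (Fadj (Finsupp.single ({a} : Finset X) (1:R)))
          (Finsupp.single C c)) := by
  intro n
  induction n with
  | zero =>
    intro C hC a c
    obtain rfl : C = ∅ := Finset.card_eq_zero.mp hC
    rw [show Finsupp.single (∅ : Finset X) c = c • Finsupp.single (∅ : Finset X) (1:R) by
      rw [Finsupp.smul_single', mul_one]]
    rw [map_smul, li_smul_right, li_smul_right, map_smul, hF.1]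
    congr 1
    rw [leftInner_empty_right hτ, leftInner_empty_right hτ]
    have h1 : (Finsupp.single ({a} : Finset X) (1:R)) ∅ = 0 := by
      rw [Finsupp.single_apply, if_neg (by simp)]
    have h2 : (Fadj (Finsupp.single ({a} : Finset X) (1:R))) ∅ = 0 := by
      apply grade_coeff_zero (Fadj_grade hτ hnd hF hadj (single_grade1 a))
      simp
    rw [h1, h2, Finsupp.single_zero, map_zero]
  | succ n ih =>
    intro C hC a c
    have hne : C.Nonempty := by
      rw [← Finset.card_pos, hC]; omega
    obtain ⟨b, hb⟩ := hne
    have hbC' : b ∉ C.erase b := Finset.notMem_erase b C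
    have hC' : (C.erase b).card = n := by
      rw [Finset.card_erase_of_mem hb, hC]
      omega
    have ht2 : τ {b} (C.erase b) * τ {b} (C.erase b) = 1 :=
      tau_sq hτ (singleton_inter_empty hbC')
    have hdec : Finsupp.single C c = (c * τ {b} (C.erase b)) •
        clWedge τ (Finsupp.single ({b} : Finset X) (1:R))
          (Finsupp.single (C.erase b) (1:R)) := by
      rw [wedge_single_single, if_pos (singleton_inter_empty hbC'), sd_not_mem hbC',
        Finset.insert_erase hb, Finsupp.smul_single']
      congr 1
      linear_combination (-c) * ht2
    rw [hdec, map_smul, li_smul_right, li_smul_right, map_smul]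
    congr 1
    rw [hF.2.2]
    rw [leib hτ _ _ _ (single_grade1 a) (F_grade hF (single_grade1 b))]
    rw [contract_basis_grade1 hτ (F_grade hF (single_grade1 b)) a]
    rw [wedge_smul_left, wedge_empty_left hτ, one_smul]
    rw [ih (C.erase b) hC' a 1]
    rw [← hF.2.2, ← map_smul, ← map_sub]
    congr 1
    rw [leib hτ _ _ _ (Fadj_grade hτ hnd hF hadj (single_grade1 a)) (single_grade1 b)]
    rw [contract_grade1_basis hτ (Fadj_grade hτ hnd hF hadj (single_grade1 a)) b]
    rw [wedge_smul_left, wedge_empty_left hτ, one_smul]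
    have key : (Fadj (Finsupp.single ({a} : Finset X) (1:R))) {b} * r b
        = (F (Finsupp.single ({b} : Finset X) (1:R))) {a} * r a := by
      have h := scadj (τ := τ) hadj (Finsupp.single ({a} : Finset X) (1:R))
        (Finsupp.single ({b} : Finset X) (1:R))
      rw [sc_single_right, sc_single_left, hτ.1 a, hτ.1 b] at h
      linear_combination h
    rw [key]

lemma L1 (hτ : Grassmannian r τ) (hnd : ∀ x : X, IsUnit (r x))
    (hF : IsOutermorphism τ F)
    (hadj : ∀ x y : Finset X →₀ R, clScalar τ (Fadj x) y = clScalar τ x (F y))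
    (a : X) (w : Finset X →₀ R) :
    clLeftInner τ (Finsupp.single ({a} : Finset X) (1:R)) (F w)
      = F (clLeftInner τ (Fadj (Finsupp.single ({a} : Finset X) (1:R))) w) := by
  induction w using Finsupp.induction_linear with
  | zero => rw [map_zero, li_zero_right, li_zero_right, map_zero]
  | add f g hf hg => rw [map_add, li_add_right, li_add_right, map_add, hf, hg]
  | single C c => exact L1_single hτ hnd hF hadj C.card C rfl a c

lemma L_basis (hτ : Grassmannian r τ) (hnd : ∀ x : X, IsUnit (r x))
    (hF : IsOutermorphism τ F)
    (hadj : ∀ x y : Finset X →₀ R, clScalar τ (Fadj x) y = clScalar τ x (F y)) :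
    ∀ (n : ℕ) (B : Finset X), B.card = n → ∀ (w : Finset X →₀ R),
    clLeftInner τ (Finsupp.single B (1:R)) (F w)
      = F (clLeftInner τ (Fadj (Finsupp.single B (1:R))) w) := by
  intro n
  induction n with
  | zero =>
    intro B hB w
    obtain rfl : B = ∅ := Finset.card_eq_zero.mp hB
    rw [Fadj_empty hτ hnd hF hadj, leftInner_empty_left hτ, leftInner_empty_left hτ,
      one_smul, one_smul]
  | succ n ih =>
    intro B hB w
    have hne : B.Nonempty := by
      rw [← Finset.card_pos, hB]; omega
    obtain ⟨b, hb⟩ := hne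
    have hbB' : b ∉ B.erase b := Finset.notMem_erase b B
    have hB' : (B.erase b).card = n := by
      rw [Finset.card_erase_of_mem hb, hB]
      omega
    have ht2 : τ {b} (B.erase b) * τ {b} (B.erase b) = 1 :=
      tau_sq hτ (singleton_inter_empty hbB')
    have hmul : Fadj (clWedge τ (Finsupp.single ({b} : Finset X) (1:R))
          (Finsupp.single (B.erase b) (1:R)))
        = clWedge τ (Fadj (Finsupp.single ({b} : Finset X) (1:R)))
            (Fadj (Finsupp.single (B.erase b) (1:R))) := by
      apply eq_of_sc hτ hnd
      intro z
      rw [scadj hadj, adj1 hτ, ih (B.erase b) hB' z, ← scadj hadj, ← adj1 hτ]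
    have hdec : Finsupp.single B (1:R) = (τ {b} (B.erase b)) •
        clWedge τ (Finsupp.single ({b} : Finset X) (1:R))
          (Finsupp.single (B.erase b) (1:R)) := by
      rw [wedge_single_single, if_pos (singleton_inter_empty hbB'), sd_not_mem hbB',
        Finset.insert_erase hb, Finsupp.smul_single']
      congr 1
      linear_combination -ht2
    rw [hdec, li_smul_left, map_smul, li_smul_left, map_smul]
    congr 1
    rw [hmul, contract_assoc hτ, contract_assoc hτ, ih (B.erase b) hB' w,
      L1 hτ hnd hF hadj b]

lemma Lfull (hτ : Grassmannian r τ) (hnd : ∀ x : X, IsUnit (r x))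
    (hF : IsOutermorphism τ F)
    (hadj : ∀ x y : Finset X →₀ R, clScalar τ (Fadj x) y = clScalar τ x (F y))
    (x w : Finset X →₀ R) :
    clLeftInner τ x (F w) = F (clLeftInner τ (Fadj x) w) := by
  induction x using Finsupp.induction_linear with
  | zero => rw [li_zero_left, map_zero, li_zero_left, map_zero]
  | add f g hf hg => rw [li_add_left, map_add, li_add_left, map_add, hf, hg]
  | single B c =>
    rw [show Finsupp.single B c = c • Finsupp.single B (1:R) by
      rw [Finsupp.smul_single', mul_one]]
    rw [li_smul_left, map_smul, li_smul_left, map_smul]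
    congr 1
    exact L_basis hτ hnd hF hadj B.card B rfl w

lemma Fadj_wedge (hτ : Grassmannian r τ) (hnd : ∀ x : X, IsUnit (r x))
    (hF : IsOutermorphism τ F)
    (hadj : ∀ x y : Finset X →₀ R, clScalar τ (Fadj x) y = clScalar τ x (F y))
    (x y : Finset X →₀ R) :
    Fadj (clWedge τ x y) = clWedge τ (Fadj x) (Fadj y) := by
  apply eq_of_sc hτ hnd
  intro z
  rw [scadj hadj, adj1 hτ, Lfull hτ hnd hF hadj y z, ← scadj hadj, ← adj1 hτ]

end FSection

end HestenesAux

open HestenesAux in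
/-- **Hestenes' Theorem.** In a nondegenerate Clifford algebra (all signature values
invertible), if `F` is an outermorphism and `F*` is its adjoint, characterized by
`F*(x) ∗ y = x ∗ F(y)` for all `x, y`, then `F*` is also an outermorphism, and
`x ⌞ F(y) = F(F*(x) ⌞ y)` and `F(x) ⌟ y = F(x ⌟ F*(y))` for all `x, y`. -/
theorem hestenes_theorem [Fintype X]
    (r : X → R) (τ : Finset X → Finset X → R) (hτ : Grassmannian r τ)
    (hnd : ∀ x : X, IsUnit (r x))
    (F Fadj : (Finset X →₀ R) →ₗ[R] (Finset X →₀ R))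
    (hF : IsOutermorphism τ F)
    (hadj : ∀ x y : Finset X →₀ R, clScalar τ (Fadj x) y = clScalar τ x (F y)) :
    IsOutermorphism τ Fadj ∧
    (∀ x y : Finset X →₀ R, clLeftInner τ x (F y) = F (clLeftInner τ (Fadj x) y)) ∧
    (∀ x y : Finset X →₀ R, clRightInner τ (F x) y = F (clRightInner τ x (Fadj y))) := by
  refine ⟨⟨Fadj_empty hτ hnd hF hadj, ?_, fun x y => Fadj_wedge hτ hnd hF hadj x y⟩,
    fun x y => Lfull hτ hnd hF hadj x y, fun x y => ?_⟩
  · intro m u hu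
    obtain ⟨x, hx, rfl⟩ := hu
    exact Fadj_grade hτ hnd hF hadj hx
  · apply eq_of_sc hτ hnd
    intro z
    have hR : sc τ (F (clRightInner τ x (Fadj y))) z
        = sc τ (F x) (clWedge τ y z) := by
      calc sc τ (F (clRightInner τ x (Fadj y))) z
          = sc τ z (F (clRightInner τ x (Fadj y))) := sc_symm _ _
        _ = sc τ (Fadj z) (clRightInner τ x (Fadj y)) := (scadj hadj _ _).symm
        _ = sc τ (clRightInner τ x (Fadj y)) (Fadj z) := sc_symm _ _
        _ = sc τ x (clWedge τ (Fadj y) (Fadj z)) := adj2 hτ _ _ _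
        _ = sc τ x (Fadj (clWedge τ y z)) := by rw [Fadj_wedge hτ hnd hF hadj]
        _ = sc τ (Fadj (clWedge τ y z)) x := sc_symm _ _
        _ = sc τ (clWedge τ y z) (F x) := scadj hadj _ _
        _ = sc τ (F x) (clWedge τ y z) := sc_symm _ _
    rw [adj2 hτ, hR]
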